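/- Let 𝔥 : ℝ² → ℝ be convex and positively 1-homogeneous, and suppose 𝔥 is uniformly round with constant c > 0, meaning that for every unit vector ν ∈ 𝕊¹ and every w ∈ ℝ² with |w| ≤ 1 and w ⊥ ν one has (𝔥(ν + w) + 𝔥(ν − w))/2 ≥ 𝔥(ν) + c·|w|². Let a, b ∈ ℝ² with a ≠ b, let m = (a + b)/2 be the midpoint of the segment ab, and let y ∈ ℝ² be a point such that y − m is orthogonal to b − a and |y − m| ≤ 2·|b − a|. Then 𝔥(y − a) + 𝔥(b − y) ≥ 𝔥(b − a) + c·|y − m|² / (4·|b − a|). -/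

import Mathlib

open RealInnerProductSpace

set_option maxHeartbeats 1000000 in
/-- Let `𝔥 : ℝ² → ℝ` be convex, positively 1-homogeneous and uniformly
round with constant `c > 0`: for every unit vector `ν` and every `w ⊥ ν` with `‖w‖ ≤ 1`,
`(𝔥 (ν + w) + 𝔥 (ν - w)) / 2 ≥ 𝔥 ν + c ‖w‖²`. If `a ≠ b`, `m` is the midpoint of the
segment `ab`, and `y` is such that `y - m ⊥ b - a` and `‖y - m‖ ≤ 2 ‖b - a‖`, then
`𝔥 (y - a) + 𝔥 (b - y) ≥ 𝔥 (b - a) + c ‖y - m‖² / (4 ‖b - a‖)`. -/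
theorem statement_13 (𝔥 : EuclideanSpace ℝ (Fin 2) → ℝ)
    (h_convex : ConvexOn ℝ Set.univ 𝔥)
    (h_homog : ∀ d : ℝ, 0 ≤ d → ∀ v, 𝔥 (d • v) = d * 𝔥 v)
    (c : ℝ) (hc : 0 < c)
    (h_round : ∀ ν : EuclideanSpace ℝ (Fin 2), ‖ν‖ = 1 →
      ∀ w : EuclideanSpace ℝ (Fin 2), ‖w‖ ≤ 1 → ⟪w, ν⟫ = 0 →
      𝔥 ν + c * ‖w‖ ^ 2 ≤ (𝔥 (ν + w) + 𝔥 (ν - w)) / 2)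
    (a b m y : EuclideanSpace ℝ (Fin 2)) (hab : a ≠ b)
    (hm : m = (2:ℝ)⁻¹ • (a + b))
    (h_perp : ⟪y - m, b - a⟫ = 0)
    (h_close : ‖y - m‖ ≤ 2 * ‖b - a‖) :
    𝔥 (b - a) + c * ‖y - m‖ ^ 2 / (4 * ‖b - a‖) ≤ 𝔥 (y - a) + 𝔥 (b - y) := by
  have hL : 0 < ‖b - a‖ := norm_pos_iff.2 (sub_ne_zero.2 (Ne.symm hab))
  set L : ℝ := ‖b - a‖ with hLdef
  have hLne : L ≠ 0 := ne_of_gt hL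
  set ν : EuclideanSpace ℝ (Fin 2) := L⁻¹ • (b - a) with hν
  set w : EuclideanSpace ℝ (Fin 2) := (2 / L) • (y - m) with hw
  have hνnorm : ‖ν‖ = 1 := by
    rw [hν, norm_smul, norm_inv, Real.norm_eq_abs, abs_of_pos hL]
    field_simp
    exact hLdef.symm
  have hperp : ⟪w, ν⟫ = 0 := by
    rw [hw, hν, real_inner_smul_left, real_inner_smul_right, h_perp]
    ring
  have hLhalf : (0:ℝ) ≤ L / 2 := by positivity
  have h1 : (L / 2) • ν = (2:ℝ)⁻¹ • (b - a) := by
    rw [hν, smul_smul]; congr 1; field_simp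
  have h2 : (L / 2) • w = y - m := by
    rw [hw, smul_smul]
    have : L / 2 * (2 / L) = 1 := by field_simp
    rw [this, one_smul]
  have hya : y - a = (L / 2) • (ν + w) := by
    rw [smul_add, h1, h2, hm]; module
  have hby : b - y = (L / 2) • (ν - w) := by
    rw [smul_sub, h1, h2, hm]; module
  have hba : b - a = L • ν := by
    rw [hν, smul_smul]; field_simp; rw [one_smul]
  clear_value ν w
  set t : ℝ := ‖w‖ with ht
  have htval : t = 2 / L * ‖y - m‖ := by
    rw [ht, hw, norm_smul, Real.norm_eq_abs, abs_of_pos (by positivity : (0:ℝ) < 2 / L)]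
  have hym : ‖y - m‖ = L * t / 2 := by rw [htval]; field_simp
  have ht0 : 0 ≤ t := norm_nonneg w
  have ht4 : t ≤ 4 := by
    rw [htval]
    rw [div_mul_eq_mul_div, div_le_iff₀ hL]
    calc 2 * ‖y - m‖ ≤ 2 * (2 * L) := by nlinarith
      _ = 4 * L := by ring
  set S : ℝ := 𝔥 (ν + w) + 𝔥 (ν - w) with hS
  clear_value S
  have key : 𝔥 ν + c * t ^ 2 / 16 ≤ S / 2 := by
    rcases le_or_gt t 1 with h1t | h1t
    · have := h_round ν hνnorm w (ht ▸ h1t) hperp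
      rw [← ht, ← hS] at this
      nlinarith [sq_nonneg t]
    · have htpos : 0 < t := lt_trans one_pos h1t
      set u : EuclideanSpace ℝ (Fin 2) := t⁻¹ • w with hu
      have hunorm : ‖u‖ = 1 := by
        rw [hu, norm_smul, Real.norm_eq_abs, abs_of_pos (inv_pos.2 htpos), ← ht]
        field_simp
      have huperp : ⟪u, ν⟫ = 0 := by
        rw [hu, real_inner_smul_left, hperp]; ring
      have hr := h_round ν hνnorm u (le_of_eq hunorm) huperp
      rw [hunorm] at hr
      clear_value u
      have hconv1 : 𝔥 (ν + u) ≤ t⁻¹ * 𝔥 (ν + w) + (1 - t⁻¹) * 𝔥 ν := by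
        have hc1 : (0:ℝ) ≤ t⁻¹ := le_of_lt (inv_pos.2 htpos)
        have hc2 : (0:ℝ) ≤ 1 - t⁻¹ := by
          nlinarith [mul_inv_cancel₀ (ne_of_gt htpos)]
        have := h_convex.2 (Set.mem_univ (ν + w)) (Set.mem_univ ν) hc1 hc2 (by ring)
        have heq : t⁻¹ • (ν + w) + (1 - t⁻¹) • ν = ν + u := by
          rw [hu]; module
        rw [heq] at this
        simpa [smul_eq_mul] using this
      have hconv2 : 𝔥 (ν - u) ≤ t⁻¹ * 𝔥 (ν - w) + (1 - t⁻¹) * 𝔥 ν := by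
        have hc1 : (0:ℝ) ≤ t⁻¹ := le_of_lt (inv_pos.2 htpos)
        have hc2 : (0:ℝ) ≤ 1 - t⁻¹ := by
          nlinarith [mul_inv_cancel₀ (ne_of_gt htpos)]
        have := h_convex.2 (Set.mem_univ (ν - w)) (Set.mem_univ ν) hc1 hc2 (by ring)
        have heq : t⁻¹ • (ν - w) + (1 - t⁻¹) • ν = ν - u := by
          rw [hu]; module
        rw [heq] at this
        simpa [smul_eq_mul] using this
      -- from hr, hconv1, hconv2: c*t ≤ S/2 - 𝔥 ν
      have hstep : 𝔥 ν + c * t ≤ S / 2 := by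
        have h3 : 𝔥 ν + c ≤ (t⁻¹ * 𝔥 (ν + w) + (1 - t⁻¹) * 𝔥 ν
            + (t⁻¹ * 𝔥 (ν - w) + (1 - t⁻¹) * 𝔥 ν)) / 2 := by nlinarith
        have htinv : t * t⁻¹ = 1 := mul_inv_cancel₀ (ne_of_gt htpos)
        have h4 := mul_le_mul_of_nonneg_left h3 (le_of_lt htpos)
        have h5 : t * ((t⁻¹ * 𝔥 (ν + w) + (1 - t⁻¹) * 𝔥 ν
            + (t⁻¹ * 𝔥 (ν - w) + (1 - t⁻¹) * 𝔥 ν)) / 2) = S / 2 + (t - 1) * 𝔥 ν := by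
          rw [hS]; field_simp; ring
        rw [h5] at h4
        nlinarith [h4]
      have h6 : (0:ℝ) ≤ c * (t * (16 - t)) :=
        mul_nonneg (le_of_lt hc) (mul_nonneg ht0 (by linarith))
      nlinarith [hstep, h6]
  -- now conclude
  rw [hya, hby, hba, h_homog _ hLhalf, h_homog _ hLhalf, h_homog _ (le_of_lt hL), hym]
  have h16 : c * (L * t / 2) ^ 2 / (4 * L) = L * (c * t ^ 2 / 16) := by
    field_simp; ring
  rw [h16]
  nlinarith [key, hL]
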